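/- Let A = A_1 ⊞_s A_2 where A_1 ∈ M_g, A_2 ∈ M_h, g + h = j, and s ≤ all off-diagonal entries of A_1 and A_2, with s ≤ 1 - η. Then χ(A) = g(s, χ(A_1), χ(A_2)) where g(t,b,c) := (b + c - 2tbc)/(1 - t²bc), and χ(B) denotes the sum of all entries of B⁻¹ for an invertible matrix B. -/

import Mathlib

/-- Membership in the class `M_j` of ultrametric matrices from the paper. -/
def MemUltra (η : ℝ) {ι : Type*} [Fintype ι] [DecidableEq ι] (A : Matrix ι ι ℝ) : Prop :=
  A.IsSymm ∧ (∀ i, A i i = 1) ∧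
  (∀ i l, i ≠ l → 0 ≤ A i l ∧ A i l ≤ 1 - η) ∧
  (∀ i l p, i ≠ l → l ≠ p → i ≠ p → min (A l p) (A i p) ≤ A i l)

/-- `χ(B)`: the sum of all the entries of `B⁻¹`. -/
noncomputable def chi {ι : Type*} [Fintype ι] [DecidableEq ι] (B : Matrix ι ι ℝ) : ℝ :=
  ∑ i, ∑ l, B⁻¹ i l

/-- The block sum `A₁ ⊞_s A₂`: `A₁` on the first block, `A₂` on the second, `s` off-block. -/
def blockSum {g h : ℕ} (A₁ : Matrix (Fin g) (Fin g) ℝ) (A₂ : Matrix (Fin h) (Fin h) ℝ)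
    (s : ℝ) : Matrix (Fin g ⊕ Fin h) (Fin g ⊕ Fin h) ℝ :=
  Matrix.fromBlocks A₁ (Matrix.of fun _ _ => s) (Matrix.of fun _ _ => s) A₂

def GU {ι : Type*} [Fintype ι] (A : Matrix ι ι ℝ) : Prop :=
  (∀ i l, A i l = A l i) ∧ (∀ i l, 0 ≤ A i l) ∧ (∀ i l, A i l ≤ A i i) ∧
  (∀ i l p, i ≠ l → l ≠ p → i ≠ p → min (A l p) (A i p) ≤ A i l)

lemma GU.quad_nonneg_aux : ∀ (n : ℕ), ∀ {ι : Type} [Fintype ι] [DecidableEq ι],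
    Fintype.card ι = n → ∀ (A : Matrix ι ι ℝ), GU A → ∀ x : ι → ℝ,
    0 ≤ ∑ i, ∑ l, A i l * x i * x l := by
  intro n
  induction n using Nat.strong_induction_on with
  | _ n IH =>
  intro ι _ _ hcard A hA x
  obtain ⟨hsymm, hpos, hdiag, hultra⟩ := hA
  rcases le_or_gt n 1 with hn | hn
  · -- card ≤ 1 : at most one term
    interval_cases n
    · rw [Fintype.card_eq_zero_iff] at hcard
      simp [Finset.univ_eq_empty]
    · obtain ⟨i₀, hi₀⟩ := Fintype.card_eq_one_iff.mp hcard
      have huniv : (Finset.univ : Finset ι) = {i₀} := by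
        ext i; simp [hi₀ i]
      rw [huniv]
      simp only [Finset.sum_singleton]
      rw [mul_assoc]
      exact mul_nonneg (hpos i₀ i₀) (mul_self_nonneg _)
  · -- n ≥ 2
    have h2 : 1 < Fintype.card ι := hcard ▸ hn
    obtain ⟨a, b, hab⟩ := Fintype.one_lt_card_iff.mp h2
    have hod : (Finset.univ : Finset ι).offDiag.Nonempty :=
      ⟨(a, b), by simp [Finset.mem_offDiag, hab]⟩
    obtain ⟨⟨i₀, l₀⟩, hmem, hmin⟩ := Finset.exists_min_image _ (fun p => A p.1 p.2) hod
    simp only [Finset.mem_offDiag] at hmem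
    set t := A i₀ l₀ with ht_def
    have hne₀ : i₀ ≠ l₀ := hmem.2.2
    have ht : ∀ i l, i ≠ l → t ≤ A i l := by
      intro i l hil
      exact hmin (i, l) (by simp [Finset.mem_offDiag, hil])
    have ht0 : 0 ≤ t := hpos i₀ l₀
    have htdiag : ∀ i, t ≤ A i i := by
      intro i
      rcases eq_or_ne i i₀ with rfl | hi
      · exact le_trans (ht i l₀ hne₀) (hdiag i l₀)
      · exact le_trans (ht i i₀ hi) (hdiag i i₀)
    set B : Matrix ι ι ℝ := Matrix.of fun i l => A i l - t with hB_def
    have hBval : ∀ i l, B i l = A i l - t := fun i l => rfl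
    set S : Finset ι := Finset.univ.filter (fun p => p = i₀ ∨ t < A i₀ p) with hS_def
    have hi₀S : i₀ ∈ S := by simp [hS_def]
    have hl₀S : l₀ ∉ S := by
      simp only [hS_def, Finset.mem_filter, Finset.mem_univ, true_and, not_or, not_lt]
      exact ⟨hne₀.symm, le_rfl⟩
    have hzero : ∀ i ∈ S, ∀ l ∉ S, B i l = 0 := by
      intro i hiS l hlS
      simp only [hS_def, Finset.mem_filter, Finset.mem_univ, true_and, not_or, not_lt]
        at hiS hlS
      obtain ⟨hl₁, hl₂⟩ := hlS
      have hAl : A i₀ l = t := le_antisymm hl₂ (ht _ _ (Ne.symm hl₁))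
      have hil : i ≠ l := by
        rintro rfl
        rcases hiS with rfl | hlt
        · exact hl₁ rfl
        · exact absurd hAl (ne_of_gt hlt)
      have hle : A i l ≤ t := by
        rcases eq_or_ne i i₀ with rfl | hi₀i
        · exact hAl.le
        · rcases hiS with rfl | hlt
          · exact absurd rfl hi₀i
          · by_contra hgt
            push_neg at hgt
            have hkey := hultra i₀ l i (Ne.symm hl₁) (Ne.symm hil) (Ne.symm hi₀i)
            rw [hAl] at hkey
            have h1 : t < A l i := (hsymm i l) ▸ hgt
            exact absurd ((lt_min h1 hlt).trans_le hkey) (lt_irrefl t)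
      rw [hBval]
      linarith [ht i l hil]
    -- restricted matrices are GU
    have hGUsub : ∀ (T : Finset ι),
        GU (Matrix.of fun (i : {y // y ∈ T}) (l : {y // y ∈ T}) => B i.1 l.1) := by
      intro T
      refine ⟨fun i l => by simp [hBval, hsymm i.1 l.1], fun i l => by
        simp only [Matrix.of_apply, hBval]
        rcases eq_or_ne i.1 l.1 with e | e
        · rw [e]; linarith [htdiag l.1]
        · linarith [ht i.1 l.1 e], fun i l => by
        simp only [Matrix.of_apply, hBval]
        linarith [hdiag i.1 l.1], ?_⟩
      intro i l p hil hlp hip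
      simp only [Matrix.of_apply, hBval]
      have := hultra i.1 l.1 p.1 (fun e => hil (Subtype.ext e))
        (fun e => hlp (Subtype.ext e)) (fun e => hip (Subtype.ext e))
      calc min (A l.1 p.1 - t) (A i.1 p.1 - t)
          = min (A l.1 p.1) (A i.1 p.1) - t := min_sub_sub_right _ _ t
        _ ≤ A i.1 l.1 - t := sub_le_sub_right this t
    -- cardinalities
    have hScard : S.card < n := by
      have : S ⊂ Finset.univ := Finset.ssubset_univ_iff.mpr (fun e => hl₀S (e ▸ Finset.mem_univ l₀))
      calc S.card < Finset.univ.card := Finset.card_lt_card this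
        _ = n := by rw [Finset.card_univ, hcard]
    have hSccard : Sᶜ.card < n := by
      have hss : Sᶜ ⊂ Finset.univ := Finset.ssubset_univ_iff.mpr (by
        intro e
        have : i₀ ∈ Sᶜ := e ▸ Finset.mem_univ i₀
        rw [Finset.mem_compl] at this
        exact this hi₀S)
      calc Sᶜ.card < Finset.univ.card := Finset.card_lt_card hss
        _ = n := by rw [Finset.card_univ, hcard]
    -- apply IH to both blocks
    have hq : ∀ (T : Finset ι), T.card < n → 0 ≤ ∑ i ∈ T, ∑ l ∈ T, B i l * x i * x l := by
      intro T hT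
      have := IH T.card hT (ι := {y // y ∈ T}) (Fintype.card_coe T)
        (Matrix.of fun i l => B i.1 l.1) (hGUsub T) (fun i => x i.1)
      calc (0:ℝ) ≤ ∑ i : {y // y ∈ T}, ∑ l : {y // y ∈ T}, B i.1 l.1 * x i.1 * x l.1 := this
        _ = ∑ i ∈ T, ∑ l ∈ T, B i l * x i * x l := by
          rw [← Finset.sum_coe_sort T]
          exact Finset.sum_congr rfl fun i _ => by rw [← Finset.sum_coe_sort T]
    -- split the sum
    have hsplit : ∑ i, ∑ l, B i l * x i * x l
        = ∑ i ∈ S, ∑ l ∈ S, B i l * x i * x l + ∑ i ∈ Sᶜ, ∑ l ∈ Sᶜ, B i l * x i * x l := by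
      rw [← Finset.sum_add_sum_compl S (fun i => ∑ l, B i l * x i * x l)]
      congr 1
      · refine Finset.sum_congr rfl fun i hi => ?_
        rw [← Finset.sum_add_sum_compl S (fun l => B i l * x i * x l)]
        have : ∑ l ∈ Sᶜ, B i l * x i * x l = 0 := by
          refine Finset.sum_eq_zero fun l hl => ?_
          rw [hzero i hi l (by simpa using hl)]; ring
        rw [this, add_zero]
      · refine Finset.sum_congr rfl fun i hi => ?_
        rw [← Finset.sum_add_sum_compl S (fun l => B i l * x i * x l)]
        have : ∑ l ∈ S, B i l * x i * x l = 0 := by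
          refine Finset.sum_eq_zero fun l hl => ?_
          have : B l i = 0 := hzero l hl i (by simpa using hi)
          rw [show B i l = B l i from by simp [hBval, hsymm i l], this]; ring
        rw [this, zero_add]
    have hBq : 0 ≤ ∑ i, ∑ l, B i l * x i * x l := by
      rw [hsplit]
      exact add_nonneg (hq S hScard) (hq Sᶜ hSccard)
    -- recombine
    have hexp : ∑ i, ∑ l, A i l * x i * x l
        = ∑ i, ∑ l, B i l * x i * x l + t * ((∑ i, x i) * (∑ i, x i)) := by
      have h1 : (∑ i, x i) * (∑ i, x i) = ∑ i, ∑ l, x i * x l := by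
        rw [Finset.sum_mul]
        exact Finset.sum_congr rfl fun i _ => Finset.mul_sum _ _ _
      rw [h1, Finset.mul_sum, ← Finset.sum_add_distrib]
      refine Finset.sum_congr rfl fun i _ => ?_
      rw [Finset.mul_sum, ← Finset.sum_add_distrib]
      refine Finset.sum_congr rfl fun l _ => ?_
      rw [hBval]; ring
    rw [hexp]
    have := mul_self_nonneg (∑ i, x i)
    nlinarith

lemma GU.quad_nonneg {ι : Type} [Fintype ι] [DecidableEq ι] {A : Matrix ι ι ℝ}
    (hA : GU A) (x : ι → ℝ) : 0 ≤ ∑ i, ∑ l, A i l * x i * x l :=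
  GU.quad_nonneg_aux (Fintype.card ι) rfl A hA x


open Matrix
section lemmas
variable {ι : Type} [Fintype ι] [DecidableEq ι]

lemma MemUltra.symm_apply {η : ℝ} {A : Matrix ι ι ℝ} (hA : MemUltra η A) (i l : ι) :
    A i l = A l i := by
  have := hA.1
  rw [Matrix.IsSymm] at this
  conv_rhs => rw [← this]
  rfl

/-- The shifted matrix `A - s J - η I` is generalized ultrametric. -/
lemma MemUltra.shifted_GU {η : ℝ} {A : Matrix ι ι ℝ} (hA : MemUltra η A)
    {s : ℝ} (hs0 : 0 ≤ s) (hsη : s ≤ 1 - η) (hs : ∀ i l, i ≠ l → s ≤ A i l) :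
    GU (Matrix.of fun i l => A i l - s - (if i = l then η else 0)) := by
  have hdiag := hA.2.1
  have hbound := hA.2.2.1
  have hultra := hA.2.2.2
  refine ⟨fun i l => ?_, fun i l => ?_, fun i l => ?_, fun i l p hil hlp hip => ?_⟩
  · simp only [Matrix.of_apply, hA.symm_apply i l]
    rcases eq_or_ne i l with rfl | hne
    · rfl
    · rw [if_neg hne, if_neg (Ne.symm hne)]
  · simp only [Matrix.of_apply]
    rcases eq_or_ne i l with rfl | hne
    · rw [if_pos (rfl : i = i), hdiag i]; linarith
    · rw [if_neg hne]; simp only [sub_zero]; linarith [hs i l hne]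
  · simp only [Matrix.of_apply, if_true]
    rw [hdiag i]
    rcases eq_or_ne i l with rfl | hne
    · rw [if_pos (rfl : i = i), hdiag i]
    · rw [if_neg hne]; simp only [sub_zero]; linarith [(hbound i l hne).2]
  · simp only [Matrix.of_apply, if_neg hil, if_neg hlp, if_neg hip, sub_zero]
    have := hultra i l p hil hlp hip
    calc min (A l p - s) (A i p - s)
        = min (A l p) (A i p) - s := min_sub_sub_right _ _ s
      _ ≤ A i l - s := by linarith

lemma quad_split {A : Matrix ι ι ℝ} (s η : ℝ) (x : ι → ℝ) :
    ∑ i, ∑ l, A i l * x i * x l =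
      (∑ i, ∑ l, (Matrix.of fun i l => A i l - s - (if i = l then η else 0)) i l * x i * x l)
      + s * ((∑ i, x i) * (∑ i, x i)) + η * ∑ i, x i * x i := by
  have key : ∀ i, ∑ l, A i l * x i * x l
      = (∑ l, (Matrix.of fun i l => A i l - s - (if i = l then η else 0)) i l * x i * x l)
        + (s * x i * ∑ l, x l) + η * (x i * x i) := by
    intro i
    have hterm : ∀ l, A i l * x i * x l
        = (Matrix.of fun i l => A i l - s - (if i = l then η else 0)) i l * x i * x l
          + s * (x i * x l) + (if i = l then η * (x i * x i) else 0) := by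
      intro l
      simp only [Matrix.of_apply]
      rcases eq_or_ne i l with rfl | hne
      · simp only [if_pos (rfl : i = i), if_true]; ring
      · rw [if_neg hne, if_neg hne]; ring
    rw [Finset.sum_congr rfl fun l _ => hterm l, Finset.sum_add_distrib,
        Finset.sum_add_distrib, Finset.sum_ite_eq]
    rw [if_pos (Finset.mem_univ i), ← Finset.mul_sum, ← Finset.mul_sum, ← mul_assoc]
  rw [Finset.sum_congr rfl fun i _ => key i, Finset.sum_add_distrib, Finset.sum_add_distrib]
  congr 1
  · congr 1
    rw [← Finset.sum_mul, ← Finset.mul_sum, mul_assoc]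
  · rw [← Finset.mul_sum]

/-- quadratic form of a MemUltra matrix dominates `s (Σx)² + η Σx²`. -/
lemma MemUltra.quad_lower {η : ℝ} {A : Matrix ι ι ℝ} (hA : MemUltra η A)
    {s : ℝ} (hs0 : 0 ≤ s) (hsη : s ≤ 1 - η) (hs : ∀ i l, i ≠ l → s ≤ A i l) (x : ι → ℝ) :
    s * ((∑ i, x i) * (∑ i, x i)) + η * ∑ i, x i * x i ≤ ∑ i, ∑ l, A i l * x i * x l := by
  rw [quad_split s η x]
  have := (hA.shifted_GU hs0 hsη hs).quad_nonneg x
  linarith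

lemma MemUltra.posDef {η : ℝ} (hη : 0 < η) {A : Matrix ι ι ℝ} (hA : MemUltra η A)
    {s : ℝ} (hs0 : 0 ≤ s) (hsη : s ≤ 1 - η) (hs : ∀ i l, i ≠ l → s ≤ A i l) :
    A.PosDef := by
  refine Matrix.PosDef.of_dotProduct_mulVec_pos ?_ ?_
  · exact hA.1
  · intro x hx
    have h1 : star x ⬝ᵥ A *ᵥ x = ∑ i, ∑ l, A i l * x i * x l := by
      simp only [dotProduct, Matrix.mulVec, star_trivial]
      refine Finset.sum_congr rfl fun i _ => ?_
      rw [Finset.mul_sum]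
      exact Finset.sum_congr rfl fun l _ => by ring
    rw [h1]
    obtain ⟨i₀, hi₀⟩ := Function.ne_iff.mp hx
    have h2 : 0 < ∑ i, x i * x i := by
      have : ∀ i ∈ Finset.univ, 0 ≤ x i * x i := fun i _ => mul_self_nonneg _
      have hlt : 0 < x i₀ * x i₀ := mul_self_pos.mpr hi₀
      exact Finset.sum_pos' this ⟨i₀, Finset.mem_univ i₀, hlt⟩
    have h3 := hA.quad_lower hs0 hsη hs x
    nlinarith [mul_nonneg hs0 (mul_self_nonneg (∑ i, x i))]

lemma MemUltra.isUnit_det {η : ℝ} (hη : 0 < η) {A : Matrix ι ι ℝ} (hA : MemUltra η A)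
    {s : ℝ} (hs0 : 0 ≤ s) (hsη : s ≤ 1 - η) (hs : ∀ i l, i ≠ l → s ≤ A i l) :
    IsUnit A.det :=
  isUnit_iff_ne_zero.mpr (hA.posDef hη hs0 hsη hs).det_pos.ne'

lemma chi_eq_of_mulVec {A : Matrix ι ι ℝ} (hA : IsUnit A.det) {y : ι → ℝ}
    (hy : A *ᵥ y = fun _ => 1) : chi A = ∑ i, y i := by
  have hinv : A⁻¹ *ᵥ (fun _ => (1:ℝ)) = y := by
    rw [← hy, Matrix.mulVec_mulVec, Matrix.nonsing_inv_mul A hA, Matrix.one_mulVec]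
  have : ∀ i, ∑ l, A⁻¹ i l = y i := by
    intro i
    have := congrFun hinv i
    simpa [Matrix.mulVec, dotProduct] using this
  rw [chi]
  exact Finset.sum_congr rfl fun i _ => this i

/-- key bounds: 0 ≤ χ(A) and s·χ(A) < 1 -/
lemma MemUltra.chi_bounds {η : ℝ} (hη : 0 < η) {A : Matrix ι ι ℝ} (hA : MemUltra η A)
    {s : ℝ} (hs0 : 0 ≤ s) (hsη : s ≤ 1 - η) (hs : ∀ i l, i ≠ l → s ≤ A i l) :
    0 ≤ chi A ∧ s * chi A < 1 := by
  have hdet := hA.isUnit_det hη hs0 hsη hs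
  set x : ι → ℝ := A⁻¹ *ᵥ (fun _ => 1) with hx_def
  have hAx : A *ᵥ x = fun _ => 1 := by
    rw [hx_def, Matrix.mulVec_mulVec, Matrix.mul_nonsing_inv A hdet, Matrix.one_mulVec]
  have hchi : chi A = ∑ i, x i := chi_eq_of_mulVec hdet hAx
  set b := ∑ i, x i with hb_def
  have hquad : ∑ i, ∑ l, A i l * x i * x l = b := by
    rw [hb_def]
    refine Finset.sum_congr rfl fun i _ => ?_
    have h1 : ∑ l, A i l * x i * x l = x i * (A *ᵥ x) i := by
      simp only [Matrix.mulVec, dotProduct, Finset.mul_sum]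
      exact Finset.sum_congr rfl fun l _ => by ring
    rw [h1, hAx]
    simp
  have hlow := hA.quad_lower hs0 hsη hs x
  rw [hquad] at hlow
  have hb0 : 0 ≤ b := by
    have h0 := hA.quad_lower (le_refl 0) (by linarith) (fun i l h => (hA.2.2.1 i l h).1) x
    rw [hquad] at h0
    have : 0 ≤ ∑ i, x i * x i := Finset.sum_nonneg fun i _ => mul_self_nonneg _
    nlinarith
  rw [hchi]
  refine ⟨hb0, ?_⟩
  rcases eq_or_lt_of_le hb0 with he | hpos
  · rw [← he]; norm_num
  · -- b > 0, so x ≠ 0, so Σ x² > 0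
    have hxne : ∃ i, x i ≠ 0 := by
      by_contra hc
      push_neg at hc
      have : b = 0 := by rw [hb_def]; exact Finset.sum_eq_zero fun i _ => hc i
      linarith
    obtain ⟨i₀, hi₀⟩ := hxne
    have hsq : 0 < ∑ i, x i * x i := by
      exact Finset.sum_pos' (fun i _ => mul_self_nonneg _)
        ⟨i₀, Finset.mem_univ i₀, mul_self_pos.mpr hi₀⟩
    -- b ≥ s b² + η Σx² > s b²
    have : s * (b * b) < b := by nlinarith
    nlinarith

end lemmas

open Matrix

lemma blockSum_memUltra {η : ℝ} {g h : ℕ}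
    {A₁ : Matrix (Fin g) (Fin g) ℝ} {A₂ : Matrix (Fin h) (Fin h) ℝ}
    (hA₁ : MemUltra η A₁) (hA₂ : MemUltra η A₂) {s : ℝ}
    (hs0 : 0 ≤ s) (hsη : s ≤ 1 - η)
    (hs₁ : ∀ i l, i ≠ l → s ≤ A₁ i l) (hs₂ : ∀ i l, i ≠ l → s ≤ A₂ i l) :
    MemUltra η (blockSum A₁ A₂ s) := by
  set A := blockSum A₁ A₂ s with hA_def
  have hval : (∀ i l, A (Sum.inl i) (Sum.inl l) = A₁ i l) ∧ (∀ i l, A (Sum.inr i) (Sum.inr l) = A₂ i l)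
      ∧ (∀ i l, A (Sum.inl i) (Sum.inr l) = s) ∧ (∀ i l, A (Sum.inr i) (Sum.inl l) = s) := by
    refine ⟨fun i l => rfl, fun i l => rfl, fun i l => rfl, fun i l => rfl⟩
  have hsymmA : ∀ i l, A i l = A l i := by
    rintro (i | i) (l | l)
    · exact hA₁.symm_apply i l
    · rfl
    · rfl
    · exact hA₂.symm_apply i l
  refine ⟨?_, ?_, ?_, ?_⟩
  · ext i l; exact hsymmA l i
  · rintro (i | i)
    · exact hA₁.2.1 i
    · exact hA₂.2.1 i
  · rintro (i | i) (l | l) hil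
    · exact hA₁.2.2.1 i l (fun e => hil (e ▸ rfl))
    · exact ⟨hs0, hsη⟩
    · exact ⟨hs0, hsη⟩
    · exact hA₂.2.2.1 i l (fun e => hil (e ▸ rfl))
  · -- ultrametric condition, case analysis on blocks
    have hup₁ : ∀ i l, i ≠ l → s ≤ A₁ i l ∧ A₁ i l ≤ 1 - η := fun i l e => ⟨hs₁ i l e, (hA₁.2.2.1 i l e).2⟩
    rintro (i | i) (l | l) (p | p) hil hlp hip
    · -- all in first block
      rcases Decidable.em (i = l) with rfl | h1
      · exact absurd rfl hil
      rcases Decidable.em (l = p) with rfl | h2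
      · exact absurd rfl hlp
      rcases Decidable.em (i = p) with rfl | h3
      · exact absurd rfl hip
      · exact hA₁.2.2.2 i l p h1 h2 h3
    · -- i,l in first, p in second: entries A l p = s, A i p = s ≤ A i l
      have h1 : i ≠ l := fun e => hil (e ▸ rfl)
      simp only [hval.2.2.1, min_self, hval.1]
      exact hs₁ i l h1
    · -- i in first, l in second, p in first: A i l = s; min (A l p) (A i p) = min s (A₁ i p) ≤ s
      simp only [hval.2.2.1, hval.2.2.2]
      exact min_le_left _ _
    · -- i in first, l,p in second: A i l = s, A i p = s, min ≤ s
      simp only [hval.2.2.1]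
      exact min_le_right _ _
    · -- i in second, l,p in first
      simp only [hval.2.2.2]
      exact min_le_right _ _
    · -- i in second, l in first, p in second
      simp only [hval.2.2.2, hval.2.2.1]
      exact min_le_left _ _
    · -- i,l in second, p in first
      have h1 : i ≠ l := fun e => hil (e ▸ rfl)
      simp only [hval.2.2.2, min_self, hval.2.1]
      exact hs₂ i l h1
    · rcases Decidable.em (i = l) with rfl | h1
      · exact absurd rfl hil
      rcases Decidable.em (l = p) with rfl | h2
      · exact absurd rfl hlp
      rcases Decidable.em (i = p) with rfl | h3
      · exact absurd rfl hip
      · exact hA₂.2.2.2 i l p h1 h2 h3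

/-- `χ(A₁ ⊞_s A₂) = g(s, χ(A₁), χ(A₂))` where
`g(t,b,c) = (b + c - 2tbc)/(1 - t²bc)`. -/
theorem chi_blockSum {η : ℝ} (hη : 0 < η) {g h : ℕ}
    (A₁ : Matrix (Fin g) (Fin g) ℝ) (A₂ : Matrix (Fin h) (Fin h) ℝ)
    (hA₁ : MemUltra η A₁) (hA₂ : MemUltra η A₂) (s : ℝ)
    (hs0 : 0 ≤ s) (hsη : s ≤ 1 - η)
    (hs₁ : ∀ i l, i ≠ l → s ≤ A₁ i l) (hs₂ : ∀ i l, i ≠ l → s ≤ A₂ i l) :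
    chi (blockSum A₁ A₂ s) =
      (chi A₁ + chi A₂ - 2 * s * chi A₁ * chi A₂) / (1 - s ^ 2 * chi A₁ * chi A₂) := by
  have hdet₁ := hA₁.isUnit_det hη hs0 hsη hs₁
  have hdet₂ := hA₂.isUnit_det hη hs0 hsη hs₂
  set x₁ : Fin g → ℝ := A₁⁻¹ *ᵥ (fun _ => 1) with hx₁
  set x₂ : Fin h → ℝ := A₂⁻¹ *ᵥ (fun _ => 1) with hx₂
  have hAx₁ : A₁ *ᵥ x₁ = fun _ => 1 := by
    rw [hx₁, Matrix.mulVec_mulVec, Matrix.mul_nonsing_inv _ hdet₁, Matrix.one_mulVec]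
  have hAx₂ : A₂ *ᵥ x₂ = fun _ => 1 := by
    rw [hx₂, Matrix.mulVec_mulVec, Matrix.mul_nonsing_inv _ hdet₂, Matrix.one_mulVec]
  set b := chi A₁ with hb_def
  set c := chi A₂ with hc_def
  have hbs : b = ∑ i, x₁ i := chi_eq_of_mulVec hdet₁ hAx₁
  have hcs : c = ∑ i, x₂ i := chi_eq_of_mulVec hdet₂ hAx₂
  obtain ⟨hb0, hsb⟩ := hA₁.chi_bounds hη hs0 hsη hs₁
  obtain ⟨hc0, hsc⟩ := hA₂.chi_bounds hη hs0 hsη hs₂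
  rw [← hb_def] at hb0 hsb
  rw [← hc_def] at hc0 hsc
  have hD : 0 < 1 - s ^ 2 * b * c := by
    have h1 : (s * b) * (s * c) ≤ s * b := mul_le_of_le_one_right (mul_nonneg hs0 hb0) hsc.le
    nlinarith
  set D := 1 - s ^ 2 * b * c with hD_def
  have hDne : D ≠ 0 := ne_of_gt hD
  set α := (1 - s * c) / D with hα_def
  set β := (1 - s * b) / D with hβ_def
  set y : Fin g ⊕ Fin h → ℝ := Sum.elim (fun i => α * x₁ i) (fun i => β * x₂ i) with hy_def
  -- the big matrix is ultrametric with parameter s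
  have hU := blockSum_memUltra hA₁ hA₂ hs0 hsη hs₁ hs₂
  have hsA : ∀ i l, i ≠ l → s ≤ blockSum A₁ A₂ s i l := by
    rintro (i | i) (l | l) hil
    · exact hs₁ i l (fun e => hil (e ▸ rfl))
    · exact le_refl s
    · exact le_refl s
    · exact hs₂ i l (fun e => hil (e ▸ rfl))
  have hdet := hU.isUnit_det hη hs0 hsη hsA
  -- the solution vector
  have hAy : blockSum A₁ A₂ s *ᵥ y = fun _ => 1 := by
    funext z
    cases z with
    | inl i =>
      have h1 : (blockSum A₁ A₂ s *ᵥ y) (Sum.inl i)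
          = α * ((A₁ *ᵥ x₁) i) + s * β * (∑ l, x₂ l) := by
        simp only [Matrix.mulVec, dotProduct, Fintype.sum_sum_type, hy_def,
          Sum.elim_inl, Sum.elim_inr, Finset.mul_sum]
        congr 1
        · exact Finset.sum_congr rfl fun l _ => by
            show blockSum A₁ A₂ s (Sum.inl i) (Sum.inl l) * (α * x₁ l) = α * (A₁ i l * x₁ l)
            show A₁ i l * (α * x₁ l) = α * (A₁ i l * x₁ l); ring
        · exact Finset.sum_congr rfl fun l _ => by
            show blockSum A₁ A₂ s (Sum.inl i) (Sum.inr l) * (β * x₂ l) = s * β * x₂ l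
            show s * (β * x₂ l) = s * β * x₂ l; ring
      rw [h1, hAx₁]
      show α * 1 + s * β * (∑ l, x₂ l) = 1
      rw [← hcs, hα_def, hβ_def]
      field_simp
      ring
    | inr i =>
      have h1 : (blockSum A₁ A₂ s *ᵥ y) (Sum.inr i)
          = s * α * (∑ l, x₁ l) + β * ((A₂ *ᵥ x₂) i) := by
        simp only [Matrix.mulVec, dotProduct, Fintype.sum_sum_type, hy_def,
          Sum.elim_inl, Sum.elim_inr, Finset.mul_sum]
        congr 1
        · exact Finset.sum_congr rfl fun l _ => by
            show blockSum A₁ A₂ s (Sum.inr i) (Sum.inl l) * (α * x₁ l) = s * α * x₁ l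
            show s * (α * x₁ l) = s * α * x₁ l; ring
        · exact Finset.sum_congr rfl fun l _ => by
            show blockSum A₁ A₂ s (Sum.inr i) (Sum.inr l) * (β * x₂ l) = β * (A₂ i l * x₂ l)
            show A₂ i l * (β * x₂ l) = β * (A₂ i l * x₂ l); ring
      rw [h1, hAx₂]
      show s * α * (∑ l, x₁ l) + β * 1 = 1
      rw [← hbs, hα_def, hβ_def]
      field_simp
      ring
  have hchiA : chi (blockSum A₁ A₂ s) = ∑ z, y z := chi_eq_of_mulVec hdet hAy
  rw [hchiA]
  have hsum : ∑ z, y z = α * b + β * c := by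
    rw [Fintype.sum_sum_type]
    simp only [hy_def, Sum.elim_inl, Sum.elim_inr]
    rw [← Finset.mul_sum, ← Finset.mul_sum, ← hbs, ← hcs]
  rw [hsum, hα_def, hβ_def, hD_def]
  field_simp
  ring
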